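/- arXiv:2604.25055 — 3 statements merged into one kernel-verified Lean document; each statement's English description precedes it below -/
import Mathlib

section
/- Let G be a König–Egerváry graph and let H be a subgraph of G, each of whose connected components is either a single edge (a copy of K₂) or a cycle, such that the order |V(H)| is maximum among all subgraphs of G with this property. Then no connected component of H is an odd cycle. -/
/-! ## Basic matching terminology -/

/-- `M` is a matching of the simple graph `G`: a set of edges of `G` that are pairwise
non-adjacent, i.e. no two distinct edges of `M` share a vertex. -/
def IsMatching {V : Type} (G : SimpleGraph V) (M : Finset (Sym2 V)) : Prop :=
  (∀ e ∈ M, e ∈ G.edgeSet) ∧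
  ∀ e ∈ M, ∀ f ∈ M, e ≠ f → ∀ v : V, ¬(v ∈ e ∧ v ∈ f)

/-- A vertex `v` is saturated by the edge set `M` if it is an endpoint of some edge of `M`. -/
def Saturates {V : Type} (M : Finset (Sym2 V)) (v : V) : Prop := ∃ e ∈ M, v ∈ e

/-- `M` is a perfect matching of `G`: a matching saturating every vertex of `G`. -/
def IsPerfectMatching {V : Type} (G : SimpleGraph V) (M : Finset (Sym2 V)) : Prop :=
  IsMatching G M ∧ ∀ v : V, Saturates M v

/-- The matching number `μ(G)`: the maximum cardinality of a matching of `G`. -/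
noncomputable def matchNum {V : Type} (G : SimpleGraph V) : ℕ :=
  sSup {n | ∃ M : Finset (Sym2 V), IsMatching G M ∧ M.card = n}

/-- The independence number `α(G)`: the maximum cardinality of a set of pairwise
non-adjacent vertices. -/
noncomputable def indepNum {V : Type} (G : SimpleGraph V) : ℕ :=
  sSup {n | ∃ S : Finset V, (∀ u ∈ S, ∀ v ∈ S, ¬ G.Adj u v) ∧ S.card = n}

/-- `G` is a König–Egerváry graph if `α(G) + μ(G) = |V(G)|`. -/
def IsKonigEgervary {V : Type} [Fintype V] (G : SimpleGraph V) : Prop :=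
  indepNum G + matchNum G = Fintype.card V

/-! ## Degrees and graphs whose components are single edges or cycles -/

/-- The degree of `v` in `H`, as the cardinality of its neighbour set. -/
noncomputable def ndeg {V : Type} (H : SimpleGraph V) (v : V) : ℕ := (H.neighborSet v).ncard

/-- Every connected component of (the finite simple graph) `H` is a single edge (a copy of
`K₂`) or a cycle: every vertex has degree `1` or `2`, and the degree is constant on each
connected component (a finite connected `1`-regular graph is `K₂`, and a finite connected
`2`-regular graph is a cycle). -/
def ComponentsAreEdgesOrCycles {V : Type} (H : SimpleGraph V) : Prop :=
  (∀ v : V, ndeg H v = 1 ∨ ndeg H v = 2) ∧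
  ∀ ⦃u v : V⦄, H.Adj u v → ndeg H u = ndeg H v

/-- `H` is a Sachs subgraph of `G`: a spanning subgraph each of whose connected components
is a single edge or a cycle. -/
def IsSachsSubgraph {V : Type} (G H : SimpleGraph V) : Prop :=
  H ≤ G ∧ ComponentsAreEdgesOrCycles H

/-- `H` has a connected component which is an odd cycle: a component all of whose vertices
have degree `2` (hence a cycle) with an odd number of vertices. -/
def HasOddCycleComponent {V : Type} (H : SimpleGraph V) : Prop :=
  ∃ c : H.ConnectedComponent, (∀ v ∈ c.supp, ndeg H v = 2) ∧ Odd c.supp.ncard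

/-- Degree of a vertex in a subgraph. -/
noncomputable def subNdeg {V : Type} {G : SimpleGraph V} (H : G.Subgraph) (v : V) : ℕ :=
  (H.neighborSet v).ncard

/-- Every connected component of the subgraph `H` of `G` is a single edge or a cycle. -/
def SubComponentsAreEdgesOrCycles {V : Type} {G : SimpleGraph V} (H : G.Subgraph) : Prop :=
  (∀ v ∈ H.verts, subNdeg H v = 1 ∨ subNdeg H v = 2) ∧
  ∀ ⦃u v : V⦄, H.Adj u v → subNdeg H u = subNdeg H v

/-- The subgraph `H` of `G` has a connected component which is an odd cycle. -/
def SubHasOddCycleComponent {V : Type} {G : SimpleGraph V} (H : G.Subgraph) : Prop :=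
  ∃ c : H.coe.ConnectedComponent,
    (∀ v ∈ c.supp, subNdeg H ↑v = 2) ∧ Odd c.supp.ncard

/-- `prk G`: the maximum order of a subgraph of `G` each of whose connected components is a
single edge or a cycle (`0` for an edgeless graph). -/
noncomputable def prk {V : Type} (G : SimpleGraph V) : ℕ :=
  sSup {n | ∃ H : G.Subgraph, SubComponentsAreEdgesOrCycles H ∧ H.verts.ncard = n}

/-- `X` is a vertex cover of `H`: every edge of `H` has an endpoint in `X`. -/
def IsVertexCover {V : Type} (H : SimpleGraph V) (X : Set V) : Prop :=
  ∀ ⦃u v : V⦄, H.Adj u v → u ∈ X ∨ v ∈ X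

/-! ## Symmetric differences of matchings -/

/-- The graph on `V` whose edges are the symmetric difference `M₁ △ M₂`. -/
def symmDiffGraph {V : Type} [DecidableEq V] (M₁ M₂ : Finset (Sym2 V)) : SimpleGraph V :=
  SimpleGraph.fromEdgeSet ↑(symmDiff M₁ M₂)

/-- On the vertex set `S`, consecutive edges of `H` alternate between `M₁` and `M₂`. -/
def AltOn {V : Type} (H : SimpleGraph V) (M₁ M₂ : Finset (Sym2 V)) (S : Set V) : Prop :=
  ∀ ⦃u v w : V⦄, v ∈ S → H.Adj u v → H.Adj v w → u ≠ w →
    (s(u, v) ∈ M₁ ∧ s(v, w) ∈ M₂) ∨ (s(u, v) ∈ M₂ ∧ s(v, w) ∈ M₁)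

/-! ## Perfect flowers -/

/-- `(C, P)` is an `M`-perfect flower: `C` is an odd cycle of length `2k+1` containing
exactly `k` edges of `M`, and `P` is a nontrivial `M`-alternating path whose first and last
edges belong to `M`, such that `V(C) ∩ V(P)` consists exactly of the common endpoint `a`. -/
structure IsPerfectFlower {V : Type} [DecidableEq V] (G : SimpleGraph V)
    (M : Finset (Sym2 V)) {a b : V} (C : G.Walk a a) (P : G.Walk a b) : Prop where
  cycle : C.IsCycle
  odd : Odd C.length
  blossom : C.edges.countP (fun e => e ∈ M) = C.length / 2
  path : P.IsPath
  nontrivial : 0 < P.length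
  alternating : List.Chain' (fun e f => e ∈ M ↔ f ∉ M) P.edges
  firstEdge : ∀ e ∈ P.edges.head?, e ∈ M
  lastEdge : ∀ e ∈ P.edges.getLast?, e ∈ M
  meet : ∀ v : V, (v ∈ C.support ∧ v ∈ P.support) ↔ v = a

/-- The perfect-flower part `PF(G)`: vertices belonging to some `M`-perfect flower, for some
maximum matching `M` of `G`. -/
def PF {V : Type} [DecidableEq V] (G : SimpleGraph V) : Set V :=
  {x | ∃ M : Finset (Sym2 V), IsMatching G M ∧ M.card = matchNum G ∧
    ∃ (a b : V) (C : G.Walk a a) (P : G.Walk a b),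
      IsPerfectFlower G M C P ∧ (x ∈ C.support ∨ x ∈ P.support)}

/-- The perfect-flower-free part `PFF(G) = V(G) \ PF(G)`. -/
def PFF {V : Type} [DecidableEq V] (G : SimpleGraph V) : Set V := (PF G)ᶜ

/-! ## Determinant and permanent of a graph -/

/-- The determinant of the adjacency matrix of `G` over `ℤ`. -/
noncomputable def detG {V : Type} [Fintype V] [DecidableEq V] (G : SimpleGraph V) : ℤ :=
  letI := Classical.decRel G.Adj
  (SimpleGraph.adjMatrix ℤ G).det

/-- The permanent of the adjacency matrix of `G` over `ℤ`. -/
noncomputable def permG {V : Type} [Fintype V] [DecidableEq V] (G : SimpleGraph V) : ℤ :=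
  letI := Classical.decRel G.Adj
  (SimpleGraph.adjMatrix ℤ G).permanent

/-- `det(G[X])`, the determinant of the adjacency matrix of the induced subgraph `G[X]`
(equal to `1` when `X = ∅`, the determinant of the empty matrix). -/
noncomputable def detInd {V : Type} [Fintype V] [DecidableEq V]
    (G : SimpleGraph V) (X : Set V) : ℤ :=
  letI : Fintype ↥X := X.toFinite.fintype
  detG (G.induce X)

/-- `perm(G[X])`, the permanent of the adjacency matrix of the induced subgraph `G[X]`
(equal to `1` when `X = ∅`). -/
noncomputable def permInd {V : Type} [Fintype V] [DecidableEq V]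
    (G : SimpleGraph V) (X : Set V) : ℤ :=
  letI : Fintype ↥X := X.toFinite.fintype
  permG (G.induce X)

/-! ## Auxiliary constructions -/

/-- The subgraph of `G` spanned by the edges of a matching `M`: its vertices are the
endpoints of edges of `M` and its edges are exactly the edges of `M`. -/
def matchingSubgraph {V : Type} (G : SimpleGraph V) (M : Finset (Sym2 V))
    (hM : ∀ e ∈ M, e ∈ G.edgeSet) : G.Subgraph where
  verts := {v | ∃ e ∈ M, v ∈ e}
  Adj u v := s(u, v) ∈ M
  adj_sub h := G.mem_edgeSet.mp (hM _ h)
  edge_vert h := ⟨_, h, Sym2.mem_mk_left _ _⟩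
  symm := ⟨fun u v h => by show s(v, u) ∈ M; rw [Sym2.eq_swap]; exact h⟩

/-- The restriction of an edge set `M` to the edges with both endpoints in `X`. -/
noncomputable def restrictEdges {V : Type} (M : Finset (Sym2 V)) (X : Set V) :
    Finset (Sym2 V) :=
  letI := Classical.decPred fun e : Sym2 V => ∀ v ∈ e, v ∈ X
  M.filter fun e => ∀ v ∈ e, v ∈ X

/-- `M` is a perfect matching of the induced subgraph `G[X]`: a matching of `G` whose edges
have both endpoints in `X`, saturating every vertex of `X`. -/
def IsPerfectMatchingOn {V : Type} (G : SimpleGraph V) (X : Set V)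
    (M : Finset (Sym2 V)) : Prop :=
  (∀ e ∈ M, e ∈ G.edgeSet ∧ ∀ v ∈ e, v ∈ X) ∧
  (∀ e ∈ M, ∀ f ∈ M, e ≠ f → ∀ v : V, ¬(v ∈ e ∧ v ∈ f)) ∧
  ∀ v ∈ X, ∃ e ∈ M, v ∈ e

lemma double_count {V : Type} [DecidableEq V] (nf : V → Finset V)
    (hsymm : ∀ v w, w ∈ nf v → v ∈ nf w) (A B : Finset V) (d : ℕ) (hd : 0 < d)
    (hA : ∀ v ∈ A, (nf v).card = d ∧ nf v ⊆ B)
    (hB : ∀ w ∈ B, (nf w).card ≤ d) : A.card ≤ B.card := by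
  set P := A.biUnion fun v => (nf v).image (fun w => (v, w)) with hP
  have h1 : P.card = d * A.card := by
    rw [Finset.card_biUnion]
    · rw [Finset.sum_congr rfl (fun v hv => ?_), Finset.sum_const, smul_eq_mul, mul_comm]
      rw [Finset.card_image_of_injective _ (fun a b h => (Prod.mk.injEq _ _ _ _ ▸ h).2)]
      exact (hA v hv).1
    · intro x _ y _ hxy
      simp only [Finset.disjoint_left, Finset.mem_image, Prod.mk.injEq]
      rintro ⟨a, b⟩ h1 h2
      obtain ⟨w, _, rfl, rfl⟩ := h1
      obtain ⟨w', _, hyx, -⟩ := h2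
      exact hxy rfl
  have h2 : P ⊆ B.biUnion fun w => (nf w).image (fun v => (v, w)) := by
    rintro ⟨a, b⟩ hp
    simp only [hP, Finset.mem_biUnion, Finset.mem_image, Prod.mk.injEq] at hp ⊢
    obtain ⟨v, hv, w, hw, rfl, rfl⟩ := hp
    exact ⟨w, (hA v hv).2 hw, v, hsymm _ _ hw, rfl, rfl⟩
  have h3 : (B.biUnion fun w => (nf w).image (fun v => (v, w))).card ≤ d * B.card := by
    refine (Finset.card_biUnion_le).trans ?_
    calc ∑ w ∈ B, ((nf w).image (fun v => (v, w))).card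
        ≤ ∑ w ∈ B, d := Finset.sum_le_sum fun w hw => (Finset.card_image_le).trans (hB w hw)
      _ = d * B.card := by rw [Finset.sum_const, smul_eq_mul, mul_comm]
  exact Nat.le_of_mul_le_mul_left (h1 ▸ (Finset.card_le_card h2).trans h3) hd

section Aux
variable {V : Type} [Fintype V]

lemma exists_max_matching (G : SimpleGraph V) :
    ∃ M : Finset (Sym2 V), IsMatching G M ∧ M.card = matchNum G := by
  classical
  have hne : {n | ∃ M : Finset (Sym2 V), IsMatching G M ∧ M.card = n}.Nonempty :=
    ⟨0, ∅, ⟨fun e he => absurd he (Finset.notMem_empty e),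
      fun e he => absurd he (Finset.notMem_empty e)⟩, Finset.card_empty⟩
  have hbdd : BddAbove {n | ∃ M : Finset (Sym2 V), IsMatching G M ∧ M.card = n} := by
    refine ⟨Fintype.card (Sym2 V), ?_⟩
    rintro n ⟨M, _, rfl⟩
    exact Finset.card_le_univ M
  obtain ⟨M, hM, hcard⟩ := Nat.sSup_mem hne hbdd
  exact ⟨M, hM, hcard⟩

lemma exists_max_indep (G : SimpleGraph V) :
    ∃ S : Finset V, (∀ u ∈ S, ∀ v ∈ S, ¬ G.Adj u v) ∧ S.card = indepNum G := by
  classical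
  have hne : {n | ∃ S : Finset V, (∀ u ∈ S, ∀ v ∈ S, ¬ G.Adj u v) ∧ S.card = n}.Nonempty :=
    ⟨0, ∅, fun u hu => absurd hu (Finset.notMem_empty u), Finset.card_empty⟩
  have hbdd : BddAbove {n | ∃ S : Finset V, (∀ u ∈ S, ∀ v ∈ S, ¬ G.Adj u v) ∧ S.card = n} := by
    refine ⟨Fintype.card V, ?_⟩
    rintro n ⟨S, _, rfl⟩
    exact Finset.card_le_univ S
  obtain ⟨S, hS, hcard⟩ := Nat.sSup_mem hne hbdd
  exact ⟨S, hS, hcard⟩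

lemma matching_sachs (G : SimpleGraph V) (M : Finset (Sym2 V)) (hM : IsMatching G M) :
    SubComponentsAreEdgesOrCycles (matchingSubgraph G M hM.1) ∧
      (matchingSubgraph G M hM.1).verts.ncard = 2 * M.card := by
  classical
  have hdeg : ∀ v ∈ (matchingSubgraph G M hM.1).verts, subNdeg (matchingSubgraph G M hM.1) v = 1 := by
    rintro v ⟨e, heM, hve⟩
    obtain ⟨w, rfl⟩ := Sym2.mem_iff_exists.mp hve
    have hvw : v ≠ w := by
      intro h
      exact G.not_isDiag_of_mem_edgeSet (hM.1 _ heM) (by simp [h])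
    have hns : (matchingSubgraph G M hM.1).neighborSet v = {w} := by
      ext u
      simp only [SimpleGraph.Subgraph.mem_neighborSet, Set.mem_singleton_iff]
      constructor
      · intro hu
        have hmem : s(v, u) ∈ M := hu
        by_contra hne
        have : s(v, u) ≠ s(v, w) := fun h => hne (Sym2.congr_right.mp h)
        exact hM.2 _ hmem _ heM this v ⟨Sym2.mem_mk_left _ _, Sym2.mem_mk_left _ _⟩
      · rintro rfl; exact heM
    rw [subNdeg, hns, Set.ncard_singleton]
  constructor
  · constructor
    · exact fun v hv => Or.inl (hdeg v hv)
    · intro u v huv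
      have hu := (matchingSubgraph G M hM.1).edge_vert huv
      have hv := (matchingSubgraph G M hM.1).edge_vert huv.symm
      rw [hdeg u hu, hdeg v hv]
  · have hfin : (matchingSubgraph G M hM.1).verts.Finite := Set.toFinite _
    rw [Set.ncard_eq_toFinset_card _ hfin]
    have : hfin.toFinset = M.biUnion (fun e => Finset.univ.filter (· ∈ e)) := by
      ext v
      simp only [Set.Finite.mem_toFinset, Finset.mem_biUnion, Finset.mem_filter,
        Finset.mem_univ, true_and]
      rfl
    rw [this, Finset.card_biUnion, Finset.sum_congr rfl (fun e he => ?_),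
      Finset.sum_const, smul_eq_mul, mul_comm]
    · obtain ⟨a, b⟩ := e
      have hab : a ≠ b := by
        intro h
        exact G.not_isDiag_of_mem_edgeSet (hM.1 _ he) (by simp [h])
      have : Finset.univ.filter (· ∈ s(a, b)) = {a, b} := by
        ext u
        simp [Sym2.mem_iff]
      rw [this, Finset.card_insert_of_notMem (by simp [hab]), Finset.card_singleton]
    · intro e heM f hfM hef
      simp only [Finset.disjoint_left, Finset.mem_filter, Finset.mem_univ, true_and]
      intro v hve hvf
      exact hM.2 e heM f hfM hef v ⟨hve, hvf⟩

end Aux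

/-- Let `G` be a König–Egerváry graph and `H` a subgraph of `G` each of
whose components is a single edge or a cycle, of maximum order among all such subgraphs.
Then no component of `H` is an odd cycle. -/
theorem stmt3 {V : Type} [Fintype V] (G : SimpleGraph V) (hG : IsKonigEgervary G)
    (H : G.Subgraph) (hH : SubComponentsAreEdgesOrCycles H)
    (hmax : ∀ H' : G.Subgraph, SubComponentsAreEdgesOrCycles H' →
      H'.verts.ncard ≤ H.verts.ncard) :
    ¬ SubHasOddCycleComponent H := by
  classical
  rintro ⟨c, hc2, hcodd⟩
  -- Finset versions of the vertex sets involved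
  set Hv : Finset V := H.verts.toFinite.toFinset with hHvdef
  have hmemHv : ∀ v, v ∈ Hv ↔ v ∈ H.verts := fun v => Set.Finite.mem_toFinset _
  have hvcard : H.verts.ncard = Hv.card := Set.ncard_eq_toFinset_card _ _
  set T : Set V := Subtype.val '' c.supp with hTdef
  set Tf : Finset V := T.toFinite.toFinset with hTfdef
  have hmemT : ∀ v, v ∈ Tf ↔ v ∈ T := fun v => Set.Finite.mem_toFinset _
  have hTsub : Tf ⊆ Hv := by
    intro v hv
    obtain ⟨⟨v, hvm⟩, -, rfl⟩ := (hmemT v).mp hv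
    exact (hmemHv v).mpr hvm
  have hTcard : Tf.card = c.supp.ncard := by
    rw [← Set.ncard_eq_toFinset_card _ (T.toFinite), hTdef,
      Set.ncard_image_of_injective _ Subtype.val_injective]
  have hTodd : Odd Tf.card := hTcard ▸ hcodd
  -- neighbour finsets
  set nf : V → Finset V := fun v => (H.neighborSet v).toFinite.toFinset with hnfdef
  have hnfmem : ∀ v w, w ∈ nf v ↔ H.Adj v w := by
    intro v w
    simp [hnfdef, Set.Finite.mem_toFinset, SimpleGraph.Subgraph.mem_neighborSet]
  have hnfcard : ∀ v, (nf v).card = subNdeg H v :=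
    fun v => (Set.ncard_eq_toFinset_card _ _).symm
  have hsymm : ∀ v w, w ∈ nf v → v ∈ nf w :=
    fun v w h => (hnfmem w v).mpr ((hnfmem v w).mp h).symm
  -- properties of T
  have hTdeg : ∀ v ∈ Tf, subNdeg H v = 2 := by
    intro v hv
    obtain ⟨v', hv', rfl⟩ := (hmemT v).mp hv
    exact hc2 v' hv'
  have hTclosed : ∀ v ∈ Tf, ∀ w, H.Adj v w → w ∈ Tf := by
    intro v hv w hadj
    obtain ⟨⟨v, hvm⟩, hv', rfl⟩ := (hmemT v).mp hv
    have hwm : w ∈ H.verts := H.edge_vert hadj.symm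
    have hcoe : H.coe.Adj ⟨v, hvm⟩ ⟨w, hwm⟩ := by
      rw [SimpleGraph.Subgraph.coe_adj]
      exact hadj
    refine (hmemT w).mpr ⟨⟨w, hwm⟩, ?_, rfl⟩
    rw [SimpleGraph.ConnectedComponent.mem_supp_iff] at hv' ⊢
    rw [← hv']
    exact SimpleGraph.ConnectedComponent.sound hcoe.symm.reachable
  -- maximum independent set and maximum matching
  obtain ⟨S, hSind, hScard⟩ := exists_max_indep G
  obtain ⟨M, hMmatch, hMcard⟩ := exists_max_matching G
  obtain ⟨hsachs, hcard2⟩ := matching_sachs G M hMmatch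
  have h2mu : 2 * matchNum G ≤ Hv.card := by
    have := hmax _ hsachs
    rw [hcard2, hMcard, hvcard] at this
    exact this
  have hXcard : (Finset.univ \ S).card = matchNum G := by
    have h1 : (Finset.univ \ S).card = Fintype.card V - S.card := by
      rw [Finset.card_sdiff_of_subset (Finset.subset_univ S), Finset.card_univ]
    have h2 := hG
    rw [IsKonigEgervary] at h2
    omega
  set I : Finset V := S ∩ Hv with hIdef
  have hIS : ∀ v ∈ I, v ∈ S := fun v hv => (Finset.mem_inter.mp hv).1
  have hIindep : ∀ u ∈ I, ∀ w, H.Adj u w → w ∉ S := by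
    intro u hu w hadj hw
    exact hSind u (hIS u hu) w hw (H.adj_sub hadj)
  -- counting inside T
  have hcT : (I ∩ Tf).card ≤ (Tf \ I).card := by
    refine double_count nf hsymm _ _ 2 (by norm_num) ?_ ?_
    · intro v hv
      obtain ⟨hvI, hvT⟩ := Finset.mem_inter.mp hv
      refine ⟨by rw [hnfcard]; exact hTdeg v hvT, ?_⟩
      intro w hw
      have hadj := (hnfmem v w).mp hw
      refine Finset.mem_sdiff.mpr ⟨hTclosed v hvT w hadj, fun hwI => ?_⟩
      exact hIindep v hvI w hadj (hIS w hwI)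
    · intro w hw
      rw [hnfcard]
      exact le_of_eq (hTdeg w (Finset.mem_sdiff.mp hw).1)
  -- counting outside T
  have houtside : ∀ d, 0 < d →
      ((I \ Tf).filter (fun v => subNdeg H v = d)).card ≤
        (((Hv \ Tf) \ I).filter (fun v => subNdeg H v = d)).card := by
    intro d hd
    refine double_count nf hsymm _ _ d hd ?_ ?_
    · intro v hv
      obtain ⟨hvIT, hvd⟩ := Finset.mem_filter.mp hv
      obtain ⟨hvI, hvnT⟩ := Finset.mem_sdiff.mp hvIT
      refine ⟨by rw [hnfcard]; exact hvd, ?_⟩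
      intro w hw
      have hadj := (hnfmem v w).mp hw
      have hwH : w ∈ Hv := (hmemHv w).mpr (H.edge_vert hadj.symm)
      have hwnT : w ∉ Tf := fun hwT => hvnT (hTclosed w hwT v hadj.symm)
      have hwnI : w ∉ I := fun hwI => hIindep v hvI w hadj (hIS w hwI)
      refine Finset.mem_filter.mpr
        ⟨Finset.mem_sdiff.mpr ⟨Finset.mem_sdiff.mpr ⟨hwH, hwnT⟩, hwnI⟩, ?_⟩
      rw [← hvd]
      exact (hH.2 hadj).symm
    · intro w hw
      rw [hnfcard]
      exact le_of_eq (Finset.mem_filter.mp hw).2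
  -- combining the two degree classes outside T
  have hsplit : ∀ U : Finset V, U ⊆ Hv →
      U.card = (U.filter (fun v => subNdeg H v = 1)).card +
        (U.filter (fun v => subNdeg H v = 2)).card := by
    intro U hU
    have hunion : U.filter (fun v => subNdeg H v = 1) ∪ U.filter (fun v => subNdeg H v = 2) = U := by
      ext v
      simp only [Finset.mem_union, Finset.mem_filter]
      constructor
      · rintro (⟨h, -⟩ | ⟨h, -⟩) <;> exact h
      · intro hv
        rcases hH.1 v ((hmemHv v).mp (hU hv)) with h | h
        · exact Or.inl ⟨hv, h⟩
        · exact Or.inr ⟨hv, h⟩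
    have hdisj : Disjoint (U.filter (fun v => subNdeg H v = 1))
        (U.filter (fun v => subNdeg H v = 2)) := by
      simp only [Finset.disjoint_left, Finset.mem_filter]
      rintro v ⟨-, h1⟩ ⟨-, h2⟩
      omega
    have hcu := Finset.card_union_of_disjoint hdisj
    rw [hunion] at hcu
    exact hcu
  have hout : (I \ Tf).card ≤ ((Hv \ Tf) \ I).card := by
    rw [hsplit (I \ Tf) (fun v hv => (Finset.mem_inter.mp (Finset.mem_sdiff.mp hv).1).2),
      hsplit ((Hv \ Tf) \ I)
        (fun v hv => (Finset.mem_sdiff.mp (Finset.mem_sdiff.mp hv).1).1)]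
    exact Nat.add_le_add (houtside 1 (by norm_num)) (houtside 2 (by norm_num))
  -- final arithmetic
  have e1 : (I ∩ Tf).card + (I \ Tf).card = I.card := Finset.card_inter_add_card_sdiff I Tf
  have e2 : (Tf ∩ I).card + (Tf \ I).card = Tf.card := Finset.card_inter_add_card_sdiff Tf I
  have e2' : (Tf ∩ I).card = (I ∩ Tf).card := by rw [Finset.inter_comm]
  have e3 : ((Hv \ Tf) ∩ I).card + ((Hv \ Tf) \ I).card = (Hv \ Tf).card :=
    Finset.card_inter_add_card_sdiff _ _
  have e3' : (Hv \ Tf) ∩ I = I \ Tf := by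
    ext v
    simp only [Finset.mem_inter, Finset.mem_sdiff]
    constructor
    · rintro ⟨⟨-, hnT⟩, hI⟩; exact ⟨hI, hnT⟩
    · rintro ⟨hvI, hnT⟩; exact ⟨⟨(Finset.mem_inter.mp hvI).2, hnT⟩, hvI⟩
  have e4 : (Hv \ Tf).card + Tf.card = Hv.card := Finset.card_sdiff_add_card_eq_card hTsub
  have e5 : (Hv ∩ S).card + (Hv \ S).card = Hv.card := Finset.card_inter_add_card_sdiff Hv S
  have e5' : (Hv ∩ S).card = I.card := by rw [Finset.inter_comm]
  have e6 : (Hv \ S).card ≤ matchNum G := by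
    rw [← hXcard]
    exact Finset.card_le_card (fun v hv => Finset.mem_sdiff.mpr
      ⟨Finset.mem_univ v, (Finset.mem_sdiff.mp hv).2⟩)
  obtain ⟨k, hk⟩ := hTodd
  rw [e3'] at e3
  rw [e2'] at e2
  omega
end

section
/- Let G be a König–Egerváry graph and suppose G has a Sachs subgraph (i.e., a spanning subgraph each of whose connected components is a single edge or a cycle). Then no Sachs subgraph of G has a connected component which is an odd cycle. -/
set_option linter.unusedSectionVars false

section helpers
variable {V : Type} [Fintype V] [DecidableEq V] {H : SimpleGraph V} [DecidableRel H.Adj]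

lemma ndeg_eq_card_filter (v : V) :
    ndeg H v = (Finset.univ.filter fun u => H.Adj v u).card := by
  have h : H.neighborSet v = ↑(Finset.univ.filter fun u => H.Adj v u) := by
    ext u; simp [SimpleGraph.mem_neighborSet]
  rw [ndeg, h, Set.ncard_coe_finset]

lemma dartSum_le (A B : Finset V) (h : ∀ v ∈ A, ∀ u, H.Adj v u → u ∈ B) :
    ∑ v ∈ A, (Finset.univ.filter fun u => H.Adj v u).card
      ≤ ∑ v ∈ B, (Finset.univ.filter fun u => H.Adj v u).card := by
  have hmem : ∀ (C : Finset V) (p : V × V),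
      p ∈ (C.biUnion fun v => (Finset.univ.filter fun u => H.Adj v u).image (Prod.mk v)) ↔
        p.1 ∈ C ∧ H.Adj p.1 p.2 := by
    rintro C ⟨a, b⟩
    simp only [Finset.mem_biUnion, Finset.mem_image, Finset.mem_filter, Finset.mem_univ,
      true_and]
    constructor
    · rintro ⟨v, hv, u, hu, hE⟩
      cases hE; exact ⟨hv, hu⟩
    · rintro ⟨ha, hb⟩; exact ⟨a, ha, b, hb, rfl⟩
  have hD : ∀ C : Finset V,
      ∑ v ∈ C, (Finset.univ.filter fun u => H.Adj v u).card
        = (C.biUnion fun v => (Finset.univ.filter fun u => H.Adj v u).image (Prod.mk v)).card := by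
    intro C
    rw [Finset.card_biUnion]
    · refine Finset.sum_congr rfl fun v _ => ?_
      rw [Finset.card_image_of_injective]
      intro a b hab; cases hab; rfl
    · intro x hx y hy hxy
      simp only [Finset.disjoint_left, Finset.mem_image]
      rintro p ⟨a, ha, rfl⟩ ⟨b, hb, hE⟩
      cases hE; exact hxy rfl
  rw [hD A, hD B]
  apply Finset.card_le_card_of_injOn Prod.swap
  · rintro ⟨a, b⟩ hp
    rw [Finset.mem_coe, hmem] at hp
    rw [Finset.mem_coe, hmem]
    exact ⟨h a hp.1 b hp.2, hp.2.symm⟩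
  · exact fun x _ y _ hxy => Prod.swap_injective hxy

lemma card_le_of_const_ndeg (A B : Finset V) (d : ℕ) (hd : 0 < d)
    (hA : ∀ v ∈ A, ndeg H v = d) (hB : ∀ v ∈ B, ndeg H v = d)
    (h : ∀ v ∈ A, ∀ u, H.Adj v u → u ∈ B) : A.card ≤ B.card := by
  have key := dartSum_le A B h
  have eA : ∑ v ∈ A, (Finset.univ.filter fun u => H.Adj v u).card = A.card * d :=
    (Finset.sum_congr rfl (fun v hv => (ndeg_eq_card_filter v).symm.trans (hA v hv))).trans
      (by rw [Finset.sum_const, smul_eq_mul])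
  have eB : ∑ v ∈ B, (Finset.univ.filter fun u => H.Adj v u).card = B.card * d :=
    (Finset.sum_congr rfl (fun v hv => (ndeg_eq_card_filter v).symm.trans (hB v hv))).trans
      (by rw [Finset.sum_const, smul_eq_mul])
  rw [eA, eB] at key
  exact Nat.le_of_mul_le_mul_right key hd
end helpers

lemma indep_bound {V : Type} [Fintype V] (G H : SimpleGraph V) (hle : H ≤ G)
    (hdeg : ∀ v, ndeg H v = 1 ∨ ndeg H v = 2)
    (hconst : ∀ ⦃u v : V⦄, H.Adj u v → ndeg H u = ndeg H v)
    (c : H.ConnectedComponent) (hc2 : ∀ v ∈ c.supp, ndeg H v = 2)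
    (hodd : Odd c.supp.ncard)
    (S : Finset V) (hS : ∀ u ∈ S, ∀ v ∈ S, ¬ G.Adj u v) :
    2 * S.card + 1 ≤ Fintype.card V := by
  classical
  -- the three parts
  set W : Finset V := Finset.univ.filter (fun v => H.connectedComponentMk v = c) with hWdef
  have hWmem : ∀ v, v ∈ W ↔ v ∈ c.supp := by
    intro v
    simp [hWdef, SimpleGraph.ConnectedComponent.mem_supp_iff]
  have hWcard : W.card = c.supp.ncard := by
    have : c.supp = ↑W := by ext v; rw [Finset.mem_coe, hWmem]
    rw [this, Set.ncard_coe_finset]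
  have hWdeg : ∀ v ∈ W, ndeg H v = 2 := fun v hv => hc2 v ((hWmem v).mp hv)
  set P1 : Finset V := Finset.univ.filter (fun v => ndeg H v = 1) with hP1def
  set P2 : Finset V := Finset.univ.filter (fun v => ndeg H v = 2 ∧ v ∉ W) with hP2def
  -- partition of the vertex set
  have hcover : Finset.univ = W ∪ P1 ∪ P2 := by
    ext v
    simp only [Finset.mem_univ, true_iff, Finset.mem_union, hP1def, hP2def,
      Finset.mem_filter, Finset.mem_univ, true_and]
    by_cases hvW : v ∈ W
    · exact Or.inl (Or.inl hvW)
    · rcases hdeg v with h1 | h2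
      · exact Or.inl (Or.inr h1)
      · exact Or.inr ⟨h2, hvW⟩
  have hd1 : Disjoint W P1 := by
    rw [Finset.disjoint_left]
    intro v hvW hvP1
    rw [hP1def, Finset.mem_filter] at hvP1
    have := hWdeg v hvW
    omega
  have hd2 : Disjoint (W ∪ P1) P2 := by
    rw [Finset.disjoint_left]
    intro v hv hvP2
    rw [hP2def, Finset.mem_filter] at hvP2
    rcases Finset.mem_union.mp hv with h | h
    · exact hvP2.2.2 h
    · rw [hP1def, Finset.mem_filter] at h
      omega
  have hcardV : Fintype.card V = W.card + P1.card + P2.card := by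
    rw [← Finset.card_univ, hcover, Finset.card_union_of_disjoint hd2,
      Finset.card_union_of_disjoint hd1]
  -- adjacency stays in the same component
  have hcomp : ∀ u v : V, H.Adj u v → H.connectedComponentMk u = H.connectedComponentMk v :=
    fun u v h => SimpleGraph.ConnectedComponent.sound h.reachable
  -- neighbours of independent vertices avoid S
  have hnotS : ∀ v ∈ S, ∀ u, H.Adj v u → u ∉ S := by
    intro v hv u h hu
    exact hS v hv u hu (hle h)
  -- bound on W
  have bW : (S ∩ W).card ≤ (W \ S).card := by
    refine card_le_of_const_ndeg (H := H) _ _ 2 (by norm_num)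
      (fun v hv => hWdeg v (Finset.mem_inter.mp hv).2)
      (fun v hv => hWdeg v (Finset.mem_sdiff.mp hv).1) ?_
    intro v hv u hadj
    obtain ⟨hvS, hvW⟩ := Finset.mem_inter.mp hv
    refine Finset.mem_sdiff.mpr ⟨?_, hnotS v hvS u hadj⟩
    rw [hWdef, Finset.mem_filter]
    refine ⟨Finset.mem_univ _, ?_⟩
    rw [← hcomp v u hadj]
    exact (Finset.mem_filter.mp hvW).2
  -- bound on P1
  have bP1 : (S ∩ P1).card ≤ (P1 \ S).card := by
    refine card_le_of_const_ndeg (H := H) _ _ 1 (by norm_num)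
      (fun v hv => (Finset.mem_filter.mp (Finset.mem_inter.mp hv).2).2)
      (fun v hv => (Finset.mem_filter.mp (Finset.mem_sdiff.mp hv).1).2) ?_
    intro v hv u hadj
    obtain ⟨hvS, hvP⟩ := Finset.mem_inter.mp hv
    refine Finset.mem_sdiff.mpr ⟨?_, hnotS v hvS u hadj⟩
    rw [hP1def, Finset.mem_filter]
    exact ⟨Finset.mem_univ _, (hconst hadj.symm).trans (Finset.mem_filter.mp hvP).2⟩
  -- bound on P2
  have bP2 : (S ∩ P2).card ≤ (P2 \ S).card := by
    refine card_le_of_const_ndeg (H := H) _ _ 2 (by norm_num)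
      (fun v hv => (Finset.mem_filter.mp (Finset.mem_inter.mp hv).2).2.1)
      (fun v hv => (Finset.mem_filter.mp (Finset.mem_sdiff.mp hv).1).2.1) ?_
    intro v hv u hadj
    obtain ⟨hvS, hvP⟩ := Finset.mem_inter.mp hv
    obtain ⟨-, hv2, hvnW⟩ := Finset.mem_filter.mp hvP
    refine Finset.mem_sdiff.mpr ⟨?_, hnotS v hvS u hadj⟩
    rw [hP2def, Finset.mem_filter]
    refine ⟨Finset.mem_univ _, (hconst hadj.symm).trans hv2, ?_⟩
    intro huW
    apply hvnW
    rw [hWdef, Finset.mem_filter]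
    refine ⟨Finset.mem_univ _, ?_⟩
    rw [hcomp v u hadj]
    exact (Finset.mem_filter.mp huW).2
  -- put things together
  have eW : (S ∩ W).card + (W \ S).card = W.card := by
    rw [Finset.inter_comm]; exact Finset.card_inter_add_card_sdiff W S
  have eP1 : (S ∩ P1).card + (P1 \ S).card = P1.card := by
    rw [Finset.inter_comm]; exact Finset.card_inter_add_card_sdiff P1 S
  have eP2 : (S ∩ P2).card + (P2 \ S).card = P2.card := by
    rw [Finset.inter_comm]; exact Finset.card_inter_add_card_sdiff P2 S
  have eS : S.card = (S ∩ W).card + (S ∩ P1).card + (S ∩ P2).card := by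
    have : S = S ∩ W ∪ S ∩ P1 ∪ S ∩ P2 := by
      rw [← Finset.inter_union_distrib_left, ← Finset.inter_union_distrib_left, ← hcover,
        Finset.inter_univ]
    have hdB : Disjoint (S ∩ W) (S ∩ P1) :=
      hd1.mono Finset.inter_subset_right Finset.inter_subset_right
    have hdA : Disjoint (S ∩ W ∪ S ∩ P1) (S ∩ P2) :=
      hd2.mono (Finset.union_subset_union Finset.inter_subset_right Finset.inter_subset_right)
        Finset.inter_subset_right
    conv_lhs => rw [this]
    rw [Finset.card_union_of_disjoint hdA, Finset.card_union_of_disjoint hdB]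
  have hWodd : Odd W.card := hWcard ▸ hodd
  obtain ⟨k, hk⟩ := hWodd
  omega

lemma match_bound {V : Type} [Fintype V] (G : SimpleGraph V) (M : Finset (Sym2 V))
    (hedge : ∀ e ∈ M, e ∈ G.edgeSet)
    (hdisj : ∀ e ∈ M, ∀ f ∈ M, e ≠ f → ∀ v : V, ¬(v ∈ e ∧ v ∈ f)) :
    2 * M.card ≤ Fintype.card V := by
  classical
  have hcard2 : ∀ e ∈ M, (Finset.univ.filter (fun v => v ∈ e)).card = 2 := by
    intro e he
    have hGe := hedge e he
    revert hGe
    induction e using Sym2.ind with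
    | _ a b =>
      intro hGe
      rw [SimpleGraph.mem_edgeSet] at hGe
      have hne : a ≠ b := hGe.ne
      have : Finset.univ.filter (fun v => v ∈ s(a, b)) = {a, b} := by
        ext v; simp [Sym2.mem_iff]
      rw [this, Finset.card_insert_of_notMem (by simp [hne]), Finset.card_singleton]
  have hUcard : (M.biUnion fun e => Finset.univ.filter (fun v => v ∈ e)).card
      = ∑ e ∈ M, (Finset.univ.filter (fun v => v ∈ e)).card := by
    apply Finset.card_biUnion
    intro e he f hf hef
    rw [Function.onFun, Finset.disjoint_left]
    intro v hv hv'
    exact hdisj e he f hf hef v ⟨(Finset.mem_filter.mp hv).2, (Finset.mem_filter.mp hv').2⟩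
  have : ∑ e ∈ M, (Finset.univ.filter (fun v => v ∈ e)).card = 2 * M.card := by
    rw [Finset.sum_congr rfl hcard2, Finset.sum_const, smul_eq_mul, Nat.mul_comm]
  calc 2 * M.card = (M.biUnion fun e => Finset.univ.filter (fun v => v ∈ e)).card := by
        rw [hUcard, this]
    _ ≤ Fintype.card V := by
        rw [← Finset.card_univ]
        exact Finset.card_le_card (Finset.subset_univ _)

/-- Let `G` be a König–Egerváry graph that has a Sachs subgraph.  Then no
Sachs subgraph of `G` has a connected component which is an odd cycle. -/
theorem stmt4 {V : Type} [Fintype V] (G : SimpleGraph V) (hG : IsKonigEgervary G)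
    (hex : ∃ H : SimpleGraph V, IsSachsSubgraph G H) :
    ∀ H : SimpleGraph V, IsSachsSubgraph G H → ¬ HasOddCycleComponent H := by
  intro H hH hOdd
  classical
  obtain ⟨hle, hdeg, hconst⟩ := hH
  obtain ⟨c, hc2, hoddc⟩ := hOdd
  have hindep : ∀ S : Finset V, (∀ u ∈ S, ∀ v ∈ S, ¬ G.Adj u v) →
      2 * S.card + 1 ≤ Fintype.card V :=
    fun S hS => indep_bound G H hle hdeg hconst c hc2 hoddc S hS
  have hn1 : 1 ≤ Fintype.card V := by
    have := hindep ∅ (by simp)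
    omega
  have hI : indepNum G ≤ (Fintype.card V - 1) / 2 := by
    apply csSup_le
    · exact ⟨0, ∅, fun u hu v hv => absurd hu (Finset.notMem_empty u), Finset.card_empty⟩
    · rintro m ⟨S, hSind, rfl⟩
      have := hindep S hSind
      omega
  have hMn : matchNum G ≤ Fintype.card V / 2 := by
    apply csSup_le
    · exact ⟨0, ∅, ⟨⟨fun e he => absurd he (Finset.notMem_empty e),
        fun e he => absurd he (Finset.notMem_empty e)⟩, Finset.card_empty⟩⟩
    · rintro m ⟨M, hM, rfl⟩
      have := match_bound G M hM.1 hM.2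
      omega
  have hKE := hG
  rw [IsKonigEgervary] at hKE
  omega
end

section
/- Let G be a finite simple graph, let M be a perfect matching of G, and let (C, P) be an M-perfect flower in G. Then no edge of M has exactly one endpoint in V(C) ∪ V(P); equivalently, every vertex of V(C) ∪ V(P) is matched by M to another vertex of V(C) ∪ V(P). -/
section Aux
variable {V : Type} [DecidableEq V] {G : SimpleGraph V} {M : Finset (Sym2 V)}

def endpts : Sym2 V → Finset V := Sym2.lift ⟨fun x y => {x, y}, fun x y => Finset.pair_comm x y⟩

lemma mem_endpts {v : V} {e : Sym2 V} : v ∈ endpts e ↔ v ∈ e := by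
  induction e using Sym2.ind with
  | _ x y => simp [endpts, Sym2.mem_iff, Finset.mem_insert]

lemma card_endpts {e : Sym2 V} (h : ¬e.IsDiag) : (endpts e).card = 2 := by
  induction e using Sym2.ind with
  | _ x y =>
    rw [Sym2.mk_isDiag_iff] at h
    simp [endpts, Finset.card_pair h]

lemma cycle_cover
    (hMe : ∀ e ∈ M, e ∈ G.edgeSet)
    (hMm : ∀ e ∈ M, ∀ f ∈ M, e ≠ f → ∀ v : V, ¬(v ∈ e ∧ v ∈ f))
    {a : V} (C : G.Walk a a) (hC : C.IsCycle) (hodd : Odd C.length)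
    (hcount : C.edges.countP (fun e => e ∈ M) = C.length / 2)
    (haM : ∃ e0 ∈ M, a ∈ e0 ∧ e0 ∉ C.edges) :
    ∀ v ∈ C.support, v ≠ a → ∃ e ∈ C.edges, e ∈ M ∧ v ∈ e := by
  by_contra hcon
  push_neg at hcon
  obtain ⟨v, hv, hva, hnc⟩ := hcon
  classical
  set F : Finset (Sym2 V) := C.edges.toFinset.filter (fun e => e ∈ M) with hF
  have hnd : C.edges.Nodup := hC.isCircuit.isTrail.edges_nodup
  have hFcard : F.card = C.length / 2 := by
    rw [← hcount, List.countP_eq_length_filter]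
    have he : F = (C.edges.filter (fun e => decide (e ∈ M))).toFinset := by
      ext e; simp [hF]
    rw [he]
    exact List.toFinset_card_of_nodup (hnd.filter _)
  have hFM : ∀ e ∈ F, e ∈ M := fun e he => (Finset.mem_filter.mp he).2
  have hFC : ∀ e ∈ F, e ∈ C.edges := fun e he =>
    List.mem_toFinset.mp (Finset.mem_filter.mp he).1
  set S : Finset V := F.biUnion endpts with hS
  have hdisj : ∀ e ∈ F, ∀ f ∈ F, e ≠ f → Disjoint (endpts e) (endpts f) := by
    intro e he f hf hef
    rw [Finset.disjoint_left]
    intro u hue huf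
    exact hMm e (hFM e he) f (hFM f hf) hef u ⟨mem_endpts.mp hue, mem_endpts.mp huf⟩
  have hScard : S.card = 2 * F.card := by
    rw [hS, Finset.card_biUnion hdisj]
    rw [Finset.sum_congr rfl (fun e he =>
      card_endpts (G.not_isDiag_of_mem_edgeSet (hMe e (hFM e he))))]
    simp [mul_comm]
  have hSsub : S ⊆ (C.support.toFinset.erase a).erase v := by
    intro u hu
    rw [hS, Finset.mem_biUnion] at hu
    obtain ⟨e, heF, hue⟩ := hu
    have hue : u ∈ e := mem_endpts.mp hue
    have heC : e ∈ C.edges := hFC e heF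
    have heM : e ∈ M := hFM e heF
    have husup : u ∈ C.support := by
      induction e using Sym2.ind with
      | _ x y =>
        rcases Sym2.mem_iff.mp hue with rfl | rfl
        · exact C.fst_mem_support_of_mem_edges heC
        · exact C.snd_mem_support_of_mem_edges heC
    have hua : u ≠ a := by
      rintro rfl
      obtain ⟨e0, he0M, hae0, he0C⟩ := haM
      have : e ≠ e0 := fun h => he0C (h ▸ heC)
      exact hMm e heM e0 he0M this u ⟨hue, hae0⟩
    have huv : u ≠ v := by
      rintro rfl
      exact hnc e heC heM hue
    exact Finset.mem_erase.mpr ⟨huv, Finset.mem_erase.mpr ⟨hua, List.mem_toFinset.mpr husup⟩⟩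
  -- cardinality of C.support.toFinset
  have h3 : 3 ≤ C.length := hC.three_le_length
  have htne : C.support.tail ≠ [] := by
    have hls := C.length_support
    intro h
    rw [C.support_eq_cons, h] at hls
    simp only [List.length_cons, List.length_nil] at hls
    omega
  have hamem : a ∈ C.support.tail := by
    have h1 : C.support.getLast? = some a := by
      rw [List.getLast?_eq_getLast (l := C.support) (by simp)]
      simp
    rw [C.support_eq_cons] at h1
    obtain ⟨y, l, hyl⟩ := List.exists_cons_of_ne_nil htne
    rw [hyl, List.getLast?_cons_cons] at h1
    have h2 : (y :: l).getLast (by simp) = a := by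
      rw [List.getLast?_eq_getLast (l := y :: l) (by simp)] at h1
      exact Option.some_injective _ h1
    rw [hyl]
    exact h2 ▸ List.getLast_mem (by simp)
  have hsupcard : C.support.toFinset.card = C.length := by
    have h1 : C.support.toFinset = C.support.tail.toFinset := by
      conv_lhs => rw [C.support_eq_cons]
      rw [List.toFinset_cons, Finset.insert_eq_self.mpr (List.mem_toFinset.mpr hamem)]
    rw [h1, List.toFinset_card_of_nodup hC.support_nodup]
    have hls := C.length_support
    rw [C.support_eq_cons] at hls
    simp only [List.length_cons] at hls
    omega
  have hvmem : v ∈ C.support.toFinset.erase a :=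
    Finset.mem_erase.mpr ⟨hva, List.mem_toFinset.mpr hv⟩
  have hamem' : a ∈ C.support.toFinset := List.mem_toFinset.mpr C.start_mem_support
  have hle : S.card ≤ C.length - 2 := by
    calc S.card ≤ ((C.support.toFinset.erase a).erase v).card := Finset.card_le_card hSsub
    _ = C.support.toFinset.card - 2 := by
        rw [Finset.card_erase_of_mem hvmem, Finset.card_erase_of_mem hamem']
        omega
    _ = C.length - 2 := by rw [hsupcard]
  obtain ⟨m, hm⟩ := hodd
  rw [hScard, hFcard] at hle
  omega

lemma alt_cover : ∀ (n : ℕ) {a b : V} (Q : G.Walk a b), Q.length = n → 0 < Q.length →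
    List.Chain' (fun e f => e ∈ M ↔ f ∉ M) Q.edges →
    (∀ e ∈ Q.edges.head?, e ∈ M) → (∀ e ∈ Q.edges.getLast?, e ∈ M) →
    ∀ v ∈ Q.support, ∃ e ∈ Q.edges, e ∈ M ∧ v ∈ e := by
  intro n
  induction n using Nat.strong_induction_on with
  | _ n ih =>
    intro a b Q hlen hpos hchain hhead hlast v hv
    cases Q with
    | nil => simp at hpos
    | cons hadj q =>
      rename_i w
      cases q with
      | nil =>
        simp only [SimpleGraph.Walk.edges_cons, SimpleGraph.Walk.edges_nil] at hhead ⊢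
        have he : s(a, b) ∈ M := hhead _ rfl
        refine ⟨s(a, b), by simp, he, ?_⟩
        simp only [SimpleGraph.Walk.support_cons, SimpleGraph.Walk.support_nil,
          List.mem_cons, List.mem_singleton] at hv
        rcases hv with h | h | h
        · simp [h]
        · simp [h]
        · simp at h
      | cons hadj' q' =>
        rename_i x
        have he1 : s(a, w) ∈ M := hhead _ (by simp)
        rw [SimpleGraph.Walk.edges_cons, SimpleGraph.Walk.edges_cons, List.Chain', List.isChain_cons_cons] at hchain
        have he2 : s(w, x) ∉ M := hchain.1.mp he1
        have hq' : q'.edges ≠ [] := by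
          intro h
          apply he2
          apply hlast
          simp [h]
        have hq'pos : 0 < q'.length := by
          cases q' with
          | nil => simp at hq'
          | cons _ _ => simp
        simp only [SimpleGraph.Walk.support_cons, List.mem_cons] at hv
        rcases hv with hv | hv | hv
        · exact ⟨s(a, w), by simp, he1, by simp [hv]⟩
        · exact ⟨s(a, w), by simp, he1, by simp [hv]⟩
        · -- v ∈ q'.support
          have hchain' := hchain.2
          obtain ⟨e3, rest, hq'e⟩ := List.exists_cons_of_ne_nil hq'
          have he3 : e3 ∈ M := by
            rw [hq'e, List.isChain_cons_cons] at hchain'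
            by_contra h
            exact he2 (hchain'.1.mpr h)
          obtain ⟨e, heq, heM, hve⟩ := ih q'.length (by simp only [SimpleGraph.Walk.length_cons] at hlen; omega) q' rfl hq'pos
            (by rw [hq'e] at hchain' ⊢; exact (List.isChain_cons_cons.mp hchain').2)
            (by intro e he; rw [hq'e] at he; simp at he; rwa [← he])
            (by
              intro e he
              apply hlast
              rw [SimpleGraph.Walk.edges_cons, SimpleGraph.Walk.edges_cons]
              rw [List.getLast?_cons_cons, hq'e, List.getLast?_cons_cons]
              rwa [hq'e] at he)
            v hv
          exact ⟨e, by simp [heq], heM, hve⟩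

end Aux

/-- Let `M` be a perfect matching of `G` and `(C, P)` an `M`-perfect
flower.  Then no edge of `M` has exactly one endpoint in `V(C) ∪ V(P)`; equivalently,
every vertex of `V(C) ∪ V(P)` is matched by `M` to another vertex of `V(C) ∪ V(P)`. -/
theorem stmt8 {V : Type} [Fintype V] [DecidableEq V] (G : SimpleGraph V)
    (M : Finset (Sym2 V)) (hM : IsPerfectMatching G M)
    {a b : V} (C : G.Walk a a) (P : G.Walk a b) (hF : IsPerfectFlower G M C P) :
    (∀ e ∈ M, ∀ u v : V, e = s(u, v) →
      ((u ∈ C.support ∨ u ∈ P.support) ↔ (v ∈ C.support ∨ v ∈ P.support))) ∧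
    (∀ v : V, (v ∈ C.support ∨ v ∈ P.support) →
      ∃ u : V, (u ∈ C.support ∨ u ∈ P.support) ∧ u ≠ v ∧ s(v, u) ∈ M) := by
  obtain ⟨⟨hMe, hMm⟩, hsat⟩ := hM
  cases P with
  | nil =>
    have := hF.nontrivial
    simp at this
  | cons hadj P' =>
    rename_i w
    set P : G.Walk a b := SimpleGraph.Walk.cons hadj P' with hPdef
    have he0 : s(a, w) ∈ M := hF.firstEdge _ (by rw [hPdef, SimpleGraph.Walk.edges_cons]; rfl)
    have hwP : w ∈ P.support := by
      rw [hPdef, SimpleGraph.Walk.support_cons]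
      exact List.mem_cons_of_mem _ P'.start_mem_support
    have hwC : w ∉ C.support := by
      intro h
      exact hadj.ne ((hF.meet w).mp ⟨h, hwP⟩).symm
    have haM : ∃ e0 ∈ M, a ∈ e0 ∧ e0 ∉ C.edges := by
      refine ⟨s(a, w), he0, Sym2.mem_mk_left _ _, fun h => hwC ?_⟩
      exact C.snd_mem_support_of_mem_edges h
    have ccover := cycle_cover hMe hMm C hF.cycle hF.odd hF.blossom haM
    have pcover := alt_cover P.length P rfl hF.nontrivial hF.alternating
      hF.firstEdge hF.lastEdge
    have part2 : ∀ v : V, (v ∈ C.support ∨ v ∈ P.support) →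
        ∃ u : V, (u ∈ C.support ∨ u ∈ P.support) ∧ u ≠ v ∧ s(v, u) ∈ M := by
      intro v hv
      by_cases hv2 : v ∈ P.support
      · obtain ⟨e, heP, heM, hve⟩ := pcover v hv2
        have hdiag : ¬e.IsDiag := G.not_isDiag_of_mem_edgeSet (hMe e heM)
        induction e using Sym2.ind with
        | _ x y =>
          have hxy : x ≠ y := by rwa [Sym2.mk_isDiag_iff] at hdiag
          rcases Sym2.mem_iff.mp hve with rfl | rfl
          · exact ⟨y, Or.inr (P.snd_mem_support_of_mem_edges heP), hxy.symm, heM⟩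
          · refine ⟨x, Or.inr (P.fst_mem_support_of_mem_edges heP), hxy, ?_⟩
            rwa [Sym2.eq_swap]
      · have hvC : v ∈ C.support := hv.resolve_right hv2
        have hva : v ≠ a := by
          rintro rfl
          exact hv2 P.start_mem_support
        obtain ⟨e, heC, heM, hve⟩ := ccover v hvC hva
        have hdiag : ¬e.IsDiag := G.not_isDiag_of_mem_edgeSet (hMe e heM)
        induction e using Sym2.ind with
        | _ x y =>
          have hxy : x ≠ y := by rwa [Sym2.mk_isDiag_iff] at hdiag
          rcases Sym2.mem_iff.mp hve with rfl | rfl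
          · exact ⟨y, Or.inl (C.snd_mem_support_of_mem_edges heC), hxy.symm, heM⟩
          · refine ⟨x, Or.inl (C.fst_mem_support_of_mem_edges heC), hxy, ?_⟩
            rwa [Sym2.eq_swap]
    refine ⟨?_, part2⟩
    intro e he u v huv
    have hne : u ≠ v := by
      have := G.not_isDiag_of_mem_edgeSet (hMe e he)
      rwa [huv, Sym2.mk_isDiag_iff] at this
    have H : ∀ x y : V, s(x, y) ∈ M → x ≠ y →
        (x ∈ C.support ∨ x ∈ P.support) → (y ∈ C.support ∨ y ∈ P.support) := by
      intro x y hxyM hxy hx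
      obtain ⟨u', hu', hu'x, hxu'M⟩ := part2 x hx
      by_cases hq : s(x, y) = s(x, u')
      · rcases Sym2.eq_iff.mp hq with ⟨_, rfl⟩ | ⟨rfl, rfl⟩
        · exact hu'
        · exact absurd rfl hxy
      · exact absurd ⟨Sym2.mem_mk_left x y, Sym2.mem_mk_left x u'⟩
          (hMm _ hxyM _ hxu'M hq x)
    constructor
    · intro h
      exact H u v (huv ▸ he) hne h
    · intro h
      refine H v u ?_ hne.symm h
      rw [Sym2.eq_swap]
      exact huv ▸ he
end
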